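/- Let U be a convex subset of a normed space, q : U → ℝ convex, ω a differentiable convex function with Bregman divergence V(x,z) = ω(z) − ω(x) − ⟨∇ω(x), z − x⟩, points x̄, ȳ ∈ U, and scalars μ₁, μ₂ ≥ 0. If u* minimizes u ↦ q(u) + μ₁V(x̄,u) + μ₂V(ȳ,u) over U, then for all u ∈ U: q(u*) + μ₁V(x̄,u*) + μ₂V(ȳ,u*) ≤ q(u) + μ₁V(x̄,u) + μ₂V(ȳ,u) − (μ₁+μ₂)V(u*,u). -/

import Mathlib

theorem prox_mapping_optimality
    {H : Type*} [NormedAddCommGroup H] [InnerProductSpace ℝ H] [CompleteSpace H]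
    (U : Set H) (hUc : Convex ℝ U) (hUcl : IsClosed U)
    (q : H → ℝ) (hq : ConvexOn ℝ U q)
    (ω : H → ℝ) (g : H → H)
    (hω : ConvexOn ℝ U ω)
    (hdiff : ∀ x ∈ U, HasGradientAt ω (g x) x)
    (V : H → H → ℝ)
    (hV : ∀ x u, V x u = ω u - (ω x + (inner ℝ (g x) (u - x) : ℝ)))
    (xb yb : H) (hxb : xb ∈ U) (hyb : yb ∈ U)
    (μ₁ μ₂ : ℝ) (hμ₁ : 0 ≤ μ₁) (hμ₂ : 0 ≤ μ₂)
    (ustar : H) (hustar : ustar ∈ U)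
    (hmin : ∀ u ∈ U,
      q ustar + μ₁ * V xb ustar + μ₂ * V yb ustar ≤
        q u + μ₁ * V xb u + μ₂ * V yb u) :
    ∀ u ∈ U,
      q ustar + μ₁ * V xb ustar + μ₂ * V yb ustar ≤
        q u + μ₁ * V xb u + μ₂ * V yb u - (μ₁ + μ₂) * V ustar u := by
  intro u hu
  set v : H := u - ustar with hvdef
  set f : ℝ → ℝ := fun t => ω (ustar + t • v) with hfdef
  -- the derivative of ω along the segment at ustar
  have hline : HasDerivAt (fun t : ℝ => ustar + t • v) v 0 := by
    simpa using ((hasDerivAt_id (0 : ℝ)).smul_const v).const_add ustar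
  have hfd : HasFDerivAt ω ((InnerProductSpace.toDual ℝ H) (g ustar)) ustar :=
    hdiff ustar hustar
  have hF : HasDerivAt f ((inner ℝ (g ustar) v : ℝ)) 0 := by
    have h0 : ustar + (0 : ℝ) • v = ustar := by simp
    have := HasFDerivAt.comp_hasDerivAt (0 : ℝ) (by rw [h0]; exact hfd) hline
    simp only [InnerProductSpace.toDual_apply_apply] at this; exact this
  have hslope : Filter.Tendsto (slope f 0) (nhdsWithin 0 (Set.Ioi 0))
      (nhds ((inner ℝ (g ustar) v : ℝ))) := by
    refine (hasDerivAt_iff_tendsto_slope.mp hF).mono_left (nhdsWithin_mono 0 ?_)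
    intro x hx
    simpa using (ne_of_gt hx)
  -- per-t inequality
  have hev : ∀ᶠ t in nhdsWithin 0 (Set.Ioi 0),
      0 ≤ (q u - q ustar - (μ₁ * inner ℝ (g xb) v + μ₂ * inner ℝ (g yb) v))
        + (μ₁ + μ₂) * slope f 0 t := by
    filter_upwards [Ioc_mem_nhdsGT_of_mem (by norm_num : (0:ℝ) ∈ Set.Ico 0 1)]
      with t ht
    obtain ⟨ht0, ht1⟩ := ht
    have hcomb : (1 - t) • ustar + t • u = ustar + t • v := by
      rw [hvdef, smul_sub, sub_smul, one_smul]; abel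
    have hut : ustar + t • v ∈ U := by
      rw [← hcomb]
      exact hUc hustar hu (by linarith) ht0.le (by ring)
    have hqc : q (ustar + t • v) ≤ (1 - t) * q ustar + t * q u := by
      have := hq.2 hustar hu (by linarith : (0:ℝ) ≤ 1 - t) ht0.le (by ring)
      rwa [hcomb] at this
    have hmin' := hmin (ustar + t • v) hut
    simp only [hV] at hmin'
    have exb : (inner ℝ (g xb) (ustar + t • v - xb) : ℝ)
        = inner ℝ (g xb) (ustar - xb) + t * inner ℝ (g xb) v := by
      rw [show ustar + t • v - xb = (ustar - xb) + t • v from by abel,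
        inner_add_right, real_inner_smul_right]
    have eyb : (inner ℝ (g yb) (ustar + t • v - yb) : ℝ)
        = inner ℝ (g yb) (ustar - yb) + t * inner ℝ (g yb) v := by
      rw [show ustar + t • v - yb = (ustar - yb) + t • v from by abel,
        inner_add_right, real_inner_smul_right]
    rw [exb, eyb] at hmin'
    have key : 0 ≤ t * (q u - q ustar - (μ₁ * inner ℝ (g xb) v + μ₂ * inner ℝ (g yb) v))
        + (μ₁ + μ₂) * (f t - f 0) := by
      have hf0 : f 0 = ω ustar := by simp [hfdef]
      have hft : f t = ω (ustar + t • v) := rfl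
      rw [hf0, hft]
      nlinarith [hmin', hqc]
    have hslope_eq : slope f 0 t = (f t - f 0) / t := by
      rw [slope_def_field]; ring_nf
    rw [hslope_eq]
    have ht0' : t ≠ 0 := ne_of_gt ht0
    have := div_nonneg key ht0.le
    calc (0:ℝ) ≤ (t * (q u - q ustar - (μ₁ * inner ℝ (g xb) v + μ₂ * inner ℝ (g yb) v))
        + (μ₁ + μ₂) * (f t - f 0)) / t := this
      _ = (q u - q ustar - (μ₁ * inner ℝ (g xb) v + μ₂ * inner ℝ (g yb) v))
        + (μ₁ + μ₂) * ((f t - f 0) / t) := by field_simp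
  -- take the limit t → 0⁺
  have hkey : 0 ≤ (q u - q ustar - (μ₁ * inner ℝ (g xb) v + μ₂ * inner ℝ (g yb) v))
      + (μ₁ + μ₂) * (inner ℝ (g ustar) v : ℝ) :=
    ge_of_tendsto (Filter.Tendsto.add tendsto_const_nhds (hslope.const_mul _)) hev
  -- conclude by algebra
  simp only [hV]
  have exb : (inner ℝ (g xb) (u - xb) : ℝ)
      = inner ℝ (g xb) (ustar - xb) + inner ℝ (g xb) v := by
    rw [hvdef, show u - xb = (ustar - xb) + (u - ustar) from by abel, inner_add_right]
  have eyb : (inner ℝ (g yb) (u - yb) : ℝ)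
      = inner ℝ (g yb) (ustar - yb) + inner ℝ (g yb) v := by
    rw [hvdef, show u - yb = (ustar - yb) + (u - ustar) from by abel, inner_add_right]
  have eus : (inner ℝ (g ustar) (u - ustar) : ℝ) = inner ℝ (g ustar) v := by rw [hvdef]
  rw [exb, eyb, eus]
  nlinarith [hkey]
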